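/- arXiv:1002.0007 — 4 statements merged into one kernel-verified Lean document; each statement's English description precedes it below -/
import Mathlib

section
/- Let (X,d) be a metric space with diam X ≤ D, and let ν be a Borel measure on X whose support is all of X and with 0 < ν(X) < ∞, satisfying the Bishop–Gromov inequality with parameters (K,N), where K ≤ 0 and 1 < N < ∞. Let 0 < ε ≤ 2D and let p₁,…,p_{n₀} be distinct points of X such that the open balls B(p_k, ε/2), k = 1,…,n₀, are pairwise disjoint. Then n₀ ≤ (∫₀^D S_K^N(t) dt) / (∫₀^{ε/2} S_K^N(t) dt). -/
open MeasureTheory Metric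

/-- The model volume density `S_K^N` for `K ≤ 0`, `1 < N < ∞`. -/
noncomputable def SKN (K N t : ℝ) : ℝ :=
  if K = 0 then t ^ (N - 1)
  else Real.sinh (Real.sqrt (|K| / (N - 1)) * t) ^ (N - 1)

/-- A Borel measure `ν` of full support satisfies the Bishop–Gromov inequality with
parameters `(K, N)` if for every `x` the function
`r ↦ ν(B(x,r)) / ∫₀^r S_K^N(t) dt` is nonincreasing on `(0, ∞)`. -/
def BishopGromov {X : Type*} [MetricSpace X] [MeasurableSpace X]
    (ν : Measure X) (K N : ℝ) : Prop :=
  ∀ x : X, AntitoneOn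
    (fun r => (ν (ball x r)).toReal / ∫ t in (0:ℝ)..r, SKN K N t) (Set.Ioi 0)

lemma SKN_continuous (K N : ℝ) (hN : 1 < N) : Continuous (SKN K N) := by
  unfold SKN
  split_ifs with h
  · exact continuous_iff_continuousAt.2 fun x =>
      Real.continuousAt_rpow_const x _ (Or.inr (by linarith))
  · refine continuous_iff_continuousAt.2 fun x => ?_
    exact (Real.continuousAt_rpow_const _ _ (Or.inr (by linarith))).comp
      ((Real.continuous_sinh.comp (continuous_const.mul continuous_id)).continuousAt)

lemma SKN_pos (K N : ℝ) (hK : K ≤ 0) (hN : 1 < N) {t : ℝ} (ht : 0 < t) :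
    0 < SKN K N t := by
  unfold SKN
  split_ifs with h
  · exact Real.rpow_pos_of_pos ht _
  · apply Real.rpow_pos_of_pos
    rw [← Real.sinh_zero]
    apply Real.sinh_lt_sinh.2
    have hK' : 0 < |K| := abs_pos.2 h
    have : 0 < |K| / (N - 1) := div_pos hK' (by linarith)
    positivity

lemma I_pos (K N : ℝ) (hK : K ≤ 0) (hN : 1 < N) {r : ℝ} (hr : 0 < r) :
    0 < ∫ t in (0:ℝ)..r, SKN K N t := by
  apply intervalIntegral.intervalIntegral_pos_of_pos_on
  · exact (SKN_continuous K N hN).intervalIntegrable 0 r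
  · exact fun x hx => SKN_pos K N hK hN hx.1
  · exact hr

theorem stmt_0 {X : Type*} [MetricSpace X] [MeasurableSpace X] [BorelSpace X]
    (ν : Measure X)
    (hfull : ∀ x : X, ∀ r > (0:ℝ), 0 < ν (ball x r))
    (hpos : 0 < ν Set.univ) (hfin : ν Set.univ < ⊤)
    (K N D : ℝ) (hK : K ≤ 0) (hN : 1 < N)
    (hBG : BishopGromov ν K N)
    (hD : ∀ x y : X, dist x y ≤ D)
    (ε : ℝ) (hε : 0 < ε) (hεD : ε ≤ 2 * D)
    (n₀ : ℕ) (p : Fin n₀ → X) (hinj : Function.Injective p)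
    (hdisj : Pairwise fun i j =>
      Disjoint (ball (p i) (ε / 2)) (ball (p j) (ε / 2))) :
    (n₀ : ℝ) ≤ (∫ t in (0:ℝ)..D, SKN K N t) / ∫ t in (0:ℝ)..(ε / 2), SKN K N t := by
  set I : ℝ → ℝ := fun r => ∫ t in (0:ℝ)..r, SKN K N t with hI
  have he2 : (0:ℝ) < ε / 2 := by linarith
  have heD : ε / 2 ≤ D := by linarith
  have hD0 : (0:ℝ) < D := lt_of_lt_of_le he2 heD
  have hID : 0 < I D := I_pos K N hK hN hD0
  have hIe : 0 < I (ε / 2) := I_pos K N hK hN he2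
  have hIcont : Continuous I :=
    intervalIntegral.continuous_primitive
      (fun a b => (SKN_continuous K N hN).intervalIntegrable a b) 0
  have hc : 0 < (ν Set.univ).toReal := ENNReal.toReal_pos hpos.ne' hfin.ne
  -- key estimate for each ball
  have key : ∀ x : X, (ν Set.univ).toReal / I D ≤ (ν (ball x (ε/2))).toReal / I (ε/2) := by
    intro x
    have hball : ∀ s, D < s → ball x s = Set.univ := by
      intro s hs
      ext y
      simp only [mem_ball, Set.mem_univ, iff_true]
      exact lt_of_le_of_lt (hD y x) hs
    have hev : ∀ᶠ s in nhdsWithin D (Set.Ioi D),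
        (fun s => (ν Set.univ).toReal / I s) s ≤ (ν (ball x (ε/2))).toReal / I (ε/2) := by
      filter_upwards [self_mem_nhdsWithin] with s hs
      have hs' : D < s := hs
      have := hBG x (Set.mem_Ioi.2 he2) (Set.mem_Ioi.2 (lt_trans hD0 hs'))
        (le_trans heD hs'.le)
      simpa [hball s hs'] using this
    have htend : Filter.Tendsto (fun s => (ν Set.univ).toReal / I s)
        (nhdsWithin D (Set.Ioi D)) (nhds ((ν Set.univ).toReal / I D)) := by
      exact (Filter.Tendsto.div tendsto_const_nhds
        ((hIcont.tendsto D).mono_left nhdsWithin_le_nhds) hID.ne')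
    exact le_of_tendsto htend hev
  -- each ball has measure at least (ν univ).toReal * I(ε/2) / I D
  have hball_lb : ∀ x : X,
      (ν Set.univ).toReal * I (ε/2) / I D ≤ (ν (ball x (ε/2))).toReal := by
    intro x
    have := key x
    rw [div_le_div_iff₀ hID hIe] at this
    rw [div_le_iff₀ hID]
    linarith
  -- sum over the disjoint balls
  have hmeas : ∀ i : Fin n₀, MeasurableSet (ball (p i) (ε/2)) :=
    fun i => measurableSet_ball
  have hsum : (∑ i : Fin n₀, ν (ball (p i) (ε/2))) ≤ ν Set.univ := by
    have := measure_iUnion (μ := ν) hdisj hmeas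
    rw [tsum_fintype] at this
    rw [← this]
    exact measure_mono (Set.subset_univ _)
  have hfin' : ∀ i : Fin n₀, ν (ball (p i) (ε/2)) ≠ ⊤ :=
    fun i => (lt_of_le_of_lt (measure_mono (Set.subset_univ _)) hfin).ne
  have hsumR : (∑ i : Fin n₀, (ν (ball (p i) (ε/2))).toReal) ≤ (ν Set.univ).toReal := by
    rw [← ENNReal.toReal_sum fun i _ => hfin' i]
    exact ENNReal.toReal_mono hfin.ne hsum
  have hlow : (n₀ : ℝ) * ((ν Set.univ).toReal * I (ε/2) / I D)
      ≤ ∑ i : Fin n₀, (ν (ball (p i) (ε/2))).toReal := by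
    calc (n₀ : ℝ) * ((ν Set.univ).toReal * I (ε/2) / I D)
        = ∑ _i : Fin n₀, (ν Set.univ).toReal * I (ε/2) / I D := by
          simp [Finset.sum_const, mul_comm]
      _ ≤ ∑ i : Fin n₀, (ν (ball (p i) (ε/2))).toReal :=
          Finset.sum_le_sum fun i _ => hball_lb (p i)
  have hfinal : (n₀ : ℝ) * ((ν Set.univ).toReal * I (ε/2) / I D) ≤ (ν Set.univ).toReal :=
    hlow.trans hsumR
  rw [le_div_iff₀ hIe]
  rw [mul_div_assoc, ← mul_assoc, mul_comm ((n₀:ℝ)) ((ν Set.univ).toReal),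
    mul_assoc, ← mul_div_assoc] at hfinal
  have h2 : (n₀:ℝ) * (I (ε/2)) / I D ≤ 1 := by
    have h3 : (ν Set.univ).toReal * ((n₀:ℝ) * (I (ε/2) / I D)) ≤
        (ν Set.univ).toReal * 1 := by simpa [mul_div_assoc] using hfinal
    have := (mul_le_mul_iff_right₀ hc).1 h3
    rw [mul_div_assoc]
    linarith
  calc (n₀:ℝ) * (I (ε/2)) = ((n₀:ℝ) * I (ε/2) / I D) * I D := by
        field_simp
    _ ≤ 1 * I D := by exact mul_le_mul_of_nonneg_right h2 hID.le
    _ = I D := one_mul _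
end

section
/- For every K ≤ 0, N ∈ (1,∞), D > 0 and C > 0 there exists a constant n₃ = n₃(N,K,D,C) > 0 with the following property. Let (X₁,d₁) and (X₂,d₂) be geodesic metric spaces of diameter ≤ D, each equipped with a Borel measure of full support which is finite and nonzero and satisfies the Bishop–Gromov inequality with parameters (K,N). Let 0 < ε ≤ D, let {p₁,…,p_{n₀}} ⊆ X₁ and {q₁,…,q_{n₀}} ⊆ X₂ be minimal ε-nets having the same intersection pattern, i.e. B(p_i,ε) ∩ B(p_j,ε) ≠ ∅ if and only if B(q_i,ε) ∩ B(q_j,ε) ≠ ∅, for all i,j. Then for all i,j, if d₁(p_i,p_j) < C·ε, then d₂(q_i,q_j) < n₃·ε. -/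
open MeasureTheory Metric

/-- A metric space is geodesic if every pair of points is joined by a geodesic
(an isometric image of a real interval). -/
def IsGeodesicSpace (X : Type*) [MetricSpace X] : Prop :=
  ∀ x y : X, ∃ f : ℝ → X, f 0 = x ∧ f (dist x y) = y ∧
    ∀ s ∈ Set.Icc (0:ℝ) (dist x y), ∀ t ∈ Set.Icc (0:ℝ) (dist x y),
      dist (f s) (f t) = |s - t|

universe u v
lemma convexOn_sinh : ConvexOn ℝ (Set.Ici (0:ℝ)) Real.sinh := by
  apply convexOn_of_deriv2_nonneg (convex_Ici 0) Real.continuous_sinh.continuousOn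
    Real.differentiable_sinh.differentiableOn
  · rw [Real.deriv_sinh]
    exact Real.differentiable_cosh.differentiableOn
  · intro x hx
    simp only [Function.iterate_succ_apply', Function.iterate_zero_apply,
      Real.deriv_sinh, Real.deriv_cosh]
    exact Real.sinh_nonneg_iff.2 (le_of_lt (by simpa using hx))

lemma sinh_le_slope {x X : ℝ} (hx : 0 ≤ x) (hX : x ≤ X) (hX0 : 0 < X) :
    Real.sinh x ≤ Real.sinh X / X * x := by
  have ha : (0:ℝ) ≤ 1 - x / X := by
    rw [sub_nonneg, div_le_one hX0]; exact hX
  have hb : (0:ℝ) ≤ x / X := by positivity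
  have hab : (1 - x / X) + x / X = 1 := by ring
  have h := convexOn_sinh.2 (Set.mem_Ici.2 (le_refl (0:ℝ))) (Set.mem_Ici.2 hX0.le) ha hb hab
  simp only [smul_eq_mul, mul_zero, Real.sinh_zero, zero_add] at h
  rw [div_mul_cancel₀ _ hX0.ne'] at h
  calc Real.sinh x ≤ x / X * Real.sinh X := h
    _ = Real.sinh X / X * x := by ring

lemma self_le_sinh {x : ℝ} (hx : 0 ≤ x) : x ≤ Real.sinh x := by
  rcases eq_or_lt_of_le hx with h | h
  · simp [← h]
  · exact (Real.self_lt_sinh_iff.2 h).le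

lemma contOn_sinh_rpow (a m : ℝ) (hm : 0 ≤ m) (s : Set ℝ) :
    ContinuousOn (fun t => Real.sinh (a*t) ^ m) s := by
  exact (Real.continuous_sinh.comp (continuous_const.mul continuous_id)).continuousOn.rpow_const
    (fun t _ => Or.inr hm)

lemma contOn_mul_rpow (b m : ℝ) (hm : 0 ≤ m) (s : Set ℝ) :
    ContinuousOn (fun t => (b*t) ^ m) s := by
  exact (continuous_const.mul continuous_id).continuousOn.rpow_const (fun t _ => Or.inr hm)

lemma int_mul_rpow (b x m : ℝ) (hb : 0 ≤ b) (hx : 0 ≤ x) (hm : 0 < m) :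
    ∫ t in (0:ℝ)..x, (b*t)^m = b^m * (x^(m+1)/(m+1)) := by
  have h1 : ∀ t ∈ Set.uIcc (0:ℝ) x, (b*t)^m = b^m * t^m := by
    intro t ht
    rw [Set.uIcc_of_le hx] at ht
    exact Real.mul_rpow hb ht.1
  rw [intervalIntegral.integral_congr h1, intervalIntegral.integral_const_mul,
    integral_rpow (Or.inl (by linarith)),
    Real.zero_rpow (by linarith : m + 1 ≠ 0)]
  ring

lemma int_sinh_low (a x m : ℝ) (ha : 0 ≤ a) (hx : 0 ≤ x) (hm : 0 < m) :
    a^m * (x^(m+1)/(m+1)) ≤ ∫ t in (0:ℝ)..x, Real.sinh (a*t)^m := by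
  rw [← int_mul_rpow a x m ha hx hm]
  apply intervalIntegral.integral_mono_on hx
    ((contOn_mul_rpow a m hm.le _).intervalIntegrable)
    ((contOn_sinh_rpow a m hm.le _).intervalIntegrable)
  intro t ht
  have htn : 0 ≤ a * t := mul_nonneg ha ht.1
  exact Real.rpow_le_rpow htn (self_le_sinh htn) hm.le

lemma int_sinh_high (a x X m : ℝ) (ha : 0 < a) (hx : 0 ≤ x) (hxX : x ≤ X) (hX : 0 < X)
    (hm : 0 < m) :
    ∫ t in (0:ℝ)..x, Real.sinh (a*t)^m
      ≤ (Real.sinh (a*X)/(a*X)*a)^m * (x^(m+1)/(m+1)) := by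
  have haX : 0 < a * X := by positivity
  have hsX : 0 ≤ Real.sinh (a*X) := Real.sinh_nonneg_iff.2 haX.le
  have hb : 0 ≤ Real.sinh (a*X)/(a*X)*a := by positivity
  rw [← int_mul_rpow _ x m hb hx hm]
  apply intervalIntegral.integral_mono_on hx
    ((contOn_sinh_rpow a m hm.le _).intervalIntegrable)
    ((contOn_mul_rpow _ m hm.le _).intervalIntegrable)
  intro t ht
  have htn : 0 ≤ a * t := mul_nonneg ha.le ht.1
  have h1 : Real.sinh (a*t) ≤ Real.sinh (a*X)/(a*X) * (a*t) :=
    sinh_le_slope htn (mul_le_mul_of_nonneg_left (le_trans ht.2 hxX) ha.le) haX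
  apply Real.rpow_le_rpow (Real.sinh_nonneg_iff.2 htn) ?_ hm.le
  calc Real.sinh (a*t) ≤ Real.sinh (a*X)/(a*X) * (a*t) := h1
    _ = Real.sinh (a*X)/(a*X)*a * t := by ring

lemma aux_ratio (K N D C : ℝ) (hK : K ≤ 0) (hN : 1 < N) (hD : 0 < D) (hC : 0 < C) :
    ∃ c₀ : ℝ, 0 < c₀ ∧ ∀ ε : ℝ, 0 < ε → ε ≤ D →
      0 < (∫ t in (0:ℝ)..(ε/2), SKN K N t) ∧
      0 < (∫ t in (0:ℝ)..((2*C+3)*ε), SKN K N t) ∧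
      c₀ * ∫ t in (0:ℝ)..((2*C+3)*ε), SKN K N t ≤ ∫ t in (0:ℝ)..(ε/2), SKN K N t := by
  have hm : 0 < N - 1 := by linarith
  have hB : (0:ℝ) < 2*C+3 := by linarith
  by_cases hK0 : K = 0
  · -- Euclidean case
    refine ⟨(1/(2*(2*C+3)))^N, by positivity, fun ε hε hεD => ?_⟩
    have hint : ∀ x : ℝ, 0 ≤ x → (∫ t in (0:ℝ)..x, SKN K N t) = x^N/N := by
      intro x hx
      simp only [SKN, if_pos hK0]
      rw [integral_rpow (Or.inl (by linarith)), Real.zero_rpow (by linarith : N - 1 + 1 ≠ 0)]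
      norm_num
    rw [hint _ (by positivity), hint _ (by positivity)]
    have e2 : (1/(2*(2*C+3))) * ((2*C+3)*ε) = ε/2 := by field_simp
    refine ⟨by positivity, by positivity, ?_⟩
    calc (1/(2*(2*C+3)))^N * (((2*C+3)*ε)^N/N)
        = ((1/(2*(2*C+3)))^N * ((2*C+3)*ε)^N)/N := by ring
      _ = ((1/(2*(2*C+3))) * ((2*C+3)*ε))^N/N := by
          rw [← Real.mul_rpow (by positivity) (by positivity)]
      _ = (ε/2)^N/N := by rw [e2]
      _ ≤ (ε/2)^N/N := le_rfl
  · -- Hyperbolic case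
    set a := Real.sqrt (|K| / (N - 1)) with ha_def
    have ha : 0 < a := Real.sqrt_pos.2 (by
      apply div_pos _ hm
      exact abs_pos.2 hK0)
    set T₀ := (2*C+3)*D with hT₀
    have hT₀pos : 0 < T₀ := by positivity
    set κa := Real.sinh (a*T₀)/(a*T₀)*a with hκa_def
    have hsT : 0 < Real.sinh (a*T₀) := Real.sinh_pos_iff.2 (by positivity)
    have hκa : 0 < κa := by positivity
    refine ⟨(a/κa)^(N-1) * (1/(2*(2*C+3)))^N, by positivity, fun ε hε hεD => ?_⟩
    have hSKN : ∀ x : ℝ, (∫ t in (0:ℝ)..x, SKN K N t) = ∫ t in (0:ℝ)..x, Real.sinh (a*t)^(N-1) := by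
      intro x
      simp only [SKN, if_neg hK0]
      rfl
    have hN1 : N - 1 + 1 = N := by ring
    -- lower bound for I(ε/2)
    have hlow : a^(N-1) * ((ε/2)^N/N) ≤ ∫ t in (0:ℝ)..(ε/2), SKN K N t := by
      rw [hSKN]
      have := int_sinh_low a (ε/2) (N-1) ha.le (by positivity) hm
      rwa [hN1] at this
    have hlowR : a^(N-1) * (((2*C+3)*ε)^N/N) ≤ ∫ t in (0:ℝ)..((2*C+3)*ε), SKN K N t := by
      rw [hSKN]
      have := int_sinh_low a ((2*C+3)*ε) (N-1) ha.le (by positivity) hm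
      rwa [hN1] at this
    have hhigh : (∫ t in (0:ℝ)..((2*C+3)*ε), SKN K N t) ≤ κa^(N-1) * (((2*C+3)*ε)^N/N) := by
      rw [hSKN]
      have := int_sinh_high a ((2*C+3)*ε) T₀ (N-1) ha (by positivity)
        (by rw [hT₀]; exact mul_le_mul_of_nonneg_left hεD hB.le) hT₀pos hm
      rwa [hN1] at this
    have h2pos : (0:ℝ) < a^(N-1) * ((ε/2)^N/N) := by positivity
    have hRpos : (0:ℝ) < a^(N-1) * (((2*C+3)*ε)^N/N) := by positivity
    refine ⟨lt_of_lt_of_le h2pos hlow, lt_of_lt_of_le hRpos hlowR, ?_⟩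
    have e1 : (a/κa) * κa = a := div_mul_cancel₀ a hκa.ne'
    have e2 : (1/(2*(2*C+3))) * ((2*C+3)*ε) = ε/2 := by field_simp
    have key : (a/κa)^(N-1) * (1/(2*(2*C+3)))^N * (κa^(N-1) * (((2*C+3)*ε)^N/N))
        = a^(N-1) * ((ε/2)^N/N) := by
      calc (a/κa)^(N-1) * (1/(2*(2*C+3)))^N * (κa^(N-1) * (((2*C+3)*ε)^N/N))
          = ((a/κa)^(N-1) * κa^(N-1)) * ((1/(2*(2*C+3)))^N * ((2*C+3)*ε)^N)/N := by ring
        _ = ((a/κa) * κa)^(N-1) * ((1/(2*(2*C+3))) * ((2*C+3)*ε))^N/N := by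
            rw [← Real.mul_rpow (by positivity) hκa.le,
              ← Real.mul_rpow (by positivity) (by positivity)]
        _ = a^(N-1) * ((ε/2)^N/N) := by rw [e1, e2]; ring
    calc (a/κa)^(N-1) * (1/(2*(2*C+3)))^N * ∫ t in (0:ℝ)..((2*C+3)*ε), SKN K N t
        ≤ (a/κa)^(N-1) * (1/(2*(2*C+3)))^N * (κa^(N-1) * (((2*C+3)*ε)^N/N)) := by
          apply mul_le_mul_of_nonneg_left hhigh (by positivity)
      _ = a^(N-1) * ((ε/2)^N/N) := key
      _ ≤ ∫ t in (0:ℝ)..(ε/2), SKN K N t := hlow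

theorem stmt_2 (K N D C : ℝ) (hK : K ≤ 0) (hN : 1 < N) (hD : 0 < D) (hC : 0 < C) :
    ∃ n₃ : ℝ, 0 < n₃ ∧
      ∀ (X₁ : Type u) (_ : MetricSpace X₁) (mX₁ : MeasurableSpace X₁) (_ : BorelSpace X₁)
        (X₂ : Type v) (_ : MetricSpace X₂) (mX₂ : MeasurableSpace X₂) (_ : BorelSpace X₂)
        (ν₁ : Measure X₁) (ν₂ : Measure X₂),
        IsGeodesicSpace X₁ → IsGeodesicSpace X₂ →
        (∀ x y : X₁, dist x y ≤ D) → (∀ x y : X₂, dist x y ≤ D) →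
        (∀ x : X₁, ∀ r > (0:ℝ), 0 < ν₁ (ball x r)) →
        (∀ x : X₂, ∀ r > (0:ℝ), 0 < ν₂ (ball x r)) →
        0 < ν₁ Set.univ → ν₁ Set.univ < ⊤ →
        0 < ν₂ Set.univ → ν₂ Set.univ < ⊤ →
        BishopGromov ν₁ K N → BishopGromov ν₂ K N →
        ∀ ε : ℝ, 0 < ε → ε ≤ D →
        ∀ (n₀ : ℕ) (p : Fin n₀ → X₁) (q : Fin n₀ → X₂),
        Function.Injective p → Function.Injective q →
        (∀ x : X₁, ∃ k, x ∈ ball (p k) ε) →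
        (∀ x : X₂, ∃ k, x ∈ ball (q k) ε) →
        (Pairwise fun i j => Disjoint (ball (p i) (ε / 2)) (ball (p j) (ε / 2))) →
        (Pairwise fun i j => Disjoint (ball (q i) (ε / 2)) (ball (q j) (ε / 2))) →
        (∀ i j, (ball (p i) ε ∩ ball (p j) ε).Nonempty ↔
          (ball (q i) ε ∩ ball (q j) ε).Nonempty) →
        ∀ i j, dist (p i) (p j) < C * ε → dist (q i) (q j) < n₃ * ε := by
  classical
  obtain ⟨c₀, hc₀, hratio⟩ := aux_ratio K N D C hK hN hD hC
  refine ⟨2/c₀ + 2, by positivity, ?_⟩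
  intro X₁ _ mX₁ _ X₂ _ mX₂ _ ν₁ ν₂ hgeo₁ hgeo₂ hdiam₁ hdiam₂ hfull₁ hfull₂
    hν₁pos hν₁fin hν₂pos hν₂fin hBG₁ hBG₂ ε hε hεD n₀ p q hpinj hqinj hpcov hqcov
    hpdisj hqdisj hpattern i j hij
  have hν₁finS : ∀ s : Set X₁, ν₁ s ≠ ⊤ :=
    fun s => ((measure_mono (Set.subset_univ s)).trans_lt hν₁fin).ne
  -- geodesic from p i to p j
  obtain ⟨f, hf0, hfd, hfiso⟩ := hgeo₁ (p i) (p j)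
  set d := dist (p i) (p j) with hd_def
  have hd0 : 0 ≤ d := dist_nonneg
  have hdC : d < C * ε := hij
  -- hop lemma
  have hop : ∀ k k' : Fin n₀, (ball (p k) ε ∩ ball (p k') ε).Nonempty →
      dist (q k) (q k') < 2 * ε := by
    intro k k' h
    obtain ⟨z, hz1, hz2⟩ := (hpattern k k').1 h
    have h1 : dist (q k) z < ε := by rw [dist_comm]; exact mem_ball.mp hz1
    have h2 : dist z (q k') < ε := mem_ball.mp hz2
    calc dist (q k) (q k') ≤ dist (q k) z + dist z (q k') := dist_triangle _ _ _
      _ < 2 * ε := by linarith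
  -- the time sets
  set T : Fin n₀ → Set ℝ := fun k => {t : ℝ | (0 ≤ t ∧ t ≤ d) ∧ f t ∈ ball (p k) ε}
    with hT_def
  set s : Fin n₀ → ℝ := fun k => sSup (T k) with hs_def
  have hmemT : ∀ k (t : ℝ), t ∈ T k ↔ (0 ≤ t ∧ t ≤ d) ∧ f t ∈ ball (p k) ε := by
    intro k t; rw [hT_def]; exact Iff.rfl
  have hsval : ∀ k, s k = sSup (T k) := by intro k; rw [hs_def]
  have hTbdd : ∀ k, BddAbove (T k) := by
    intro k
    refine ⟨d, fun t ht => ?_⟩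
    exact ((hmemT k t).mp ht).1.2
  have hs_le_d : ∀ k, (T k).Nonempty → s k ≤ d := by
    intro k hk
    rw [hsval]
    exact csSup_le hk (fun t ht => ((hmemT k t).mp ht).1.2)
  have hs_nonneg : ∀ k, (T k).Nonempty → 0 ≤ s k := by
    intro k hk
    obtain ⟨t, ht⟩ := hk
    rw [hsval]
    exact le_trans ((hmemT k t).mp ht).1.1 (le_csSup (hTbdd k) ht)
  -- centers of nonempty-time balls are near p i
  have hTnear : ∀ k, (T k).Nonempty → dist (p k) (p i) < (C+1) * ε := by
    intro k hk
    obtain ⟨t, ht⟩ := hk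
    obtain ⟨⟨ht0, htd⟩, htb⟩ := (hmemT k t).mp ht
    have h1 : dist (f t) (f 0) = |t - 0| := hfiso t ⟨ht0, htd⟩ 0 ⟨le_rfl, hd0⟩
    have h2 : dist (f t) (p i) = t := by rw [hf0] at h1; rw [h1, sub_zero, abs_of_nonneg ht0]
    have h3 : dist (p k) (f t) < ε := by rw [dist_comm]; exact mem_ball.mp htb
    calc dist (p k) (p i) ≤ dist (p k) (f t) + dist (f t) (p i) := dist_triangle _ _ _
      _ < ε + t := by linarith
      _ ≤ ε + d := by linarith
      _ < (C+1) * ε := by linarith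
  -- packing bound
  have hpack : ∀ F : Finset (Fin n₀), (∀ k ∈ F, (T k).Nonempty) →
      (F.card : ℝ) ≤ 1 / c₀ := by
    intro F hF
    obtain ⟨hI2pos, hIRpos, hc₀IR⟩ := hratio ε hε hεD
    set V : ℝ := (ν₁ (ball (p i) ((C+2)*ε))).toReal with hV_def
    have hVpos : 0 < V := by
      rw [hV_def]
      exact ENNReal.toReal_pos (hfull₁ (p i) _ (by positivity)).ne' (hν₁finS _)
    have hball : ∀ k ∈ F, c₀ * V ≤ (ν₁ (ball (p k) (ε/2))).toReal := by
      intro k hk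
      have h2R : ε/2 ≤ (2*C+3)*ε := by nlinarith
      have hmono := hBG₁ (p k) (Set.mem_Ioi.mpr (by positivity : (0:ℝ) < ε/2))
        (Set.mem_Ioi.mpr (by positivity : (0:ℝ) < (2*C+3)*ε)) h2R
      set A : ℝ := (ν₁ (ball (p k) ((2*C+3)*ε))).toReal with hA_def
      set B2 : ℝ := (ν₁ (ball (p k) (ε/2))).toReal with hB2_def
      have hAnn : 0 ≤ A := ENNReal.toReal_nonneg
      have hdiv : A * (∫ t in (0:ℝ)..(ε/2), SKN K N t)
          ≤ B2 * (∫ t in (0:ℝ)..((2*C+3)*ε), SKN K N t) :=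
        (div_le_div_iff₀ hIRpos hI2pos).mp hmono
      have h1 : c₀ * A ≤ B2 := by nlinarith [mul_le_mul_of_nonneg_left hc₀IR hAnn]
      have hVA : V ≤ A := by
        rw [hV_def, hA_def]
        apply ENNReal.toReal_mono (hν₁finS _)
        apply measure_mono
        intro z hz
        have hz1 : dist z (p i) < (C+2)*ε := mem_ball.mp hz
        have hz2 : dist (p k) (p i) < (C+1)*ε := hTnear k (hF k hk)
        have : dist z (p k) < (2*C+3)*ε := by
          calc dist z (p k) ≤ dist z (p i) + dist (p i) (p k) := dist_triangle _ _ _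
            _ = dist z (p i) + dist (p k) (p i) := by rw [dist_comm (p i) (p k)]
            _ < (2*C+3)*ε := by linarith
        exact mem_ball.mpr this
      calc c₀ * V ≤ c₀ * A := mul_le_mul_of_nonneg_left hVA hc₀.le
        _ ≤ B2 := h1
    have hdisj : (↑F : Set (Fin n₀)).PairwiseDisjoint (fun k => ball (p k) (ε/2)) :=
      fun x _ y _ hxy => hpdisj hxy
    have hsum : ν₁ (⋃ k ∈ F, ball (p k) (ε/2)) = ∑ k ∈ F, ν₁ (ball (p k) (ε/2)) :=
      measure_biUnion_finset hdisj (fun k _ => measurableSet_ball)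
    have hsub : (⋃ k ∈ F, ball (p k) (ε/2)) ⊆ ball (p i) ((C+2)*ε) := by
      refine Set.iUnion₂_subset fun k hk z hz => ?_
      have hz1 : dist z (p k) < ε/2 := mem_ball.mp hz
      have hz2 : dist (p k) (p i) < (C+1)*ε := hTnear k (hF k hk)
      refine mem_ball.mpr ?_
      calc dist z (p i) ≤ dist z (p k) + dist (p k) (p i) := dist_triangle _ _ _
        _ < (C+2)*ε := by linarith
    have hsumle : ∑ k ∈ F, (ν₁ (ball (p k) (ε/2))).toReal ≤ V := by
      rw [← ENNReal.toReal_sum (fun k _ => hν₁finS _), ← hsum]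
      exact ENNReal.toReal_mono (hν₁finS _) (measure_mono hsub)
    have hcardsum : (F.card : ℝ) * (c₀ * V) ≤ ∑ k ∈ F, (ν₁ (ball (p k) (ε/2))).toReal := by
      have := Finset.card_nsmul_le_sum F (fun k => (ν₁ (ball (p k) (ε/2))).toReal)
        (c₀ * V) hball
      simpa [nsmul_eq_mul] using this
    have : (F.card : ℝ) * (c₀ * V) ≤ V := le_trans hcardsum hsumle
    rw [le_div_iff₀ hc₀]
    nlinarith
  -- extension: can move a little beyond any time in a ball
  have hextend : ∀ (k' : Fin n₀) (u : ℝ), u ∈ T k' → u < d → ∃ t ∈ T k', u < t := by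
    intro k' u hu hud
    obtain ⟨⟨hu0, hud'⟩, hub⟩ := (hmemT k' u).mp hu
    have hδ : 0 < ε - dist (f u) (p k') := by
      have := mem_ball.mp hub; linarith
    set t := min d (u + (ε - dist (f u) (p k'))/2) with ht_def
    have htu : u < t := lt_min hud (by linarith)
    have ht0 : 0 ≤ t := le_trans hu0 htu.le
    have htd : t ≤ d := min_le_left _ _
    have htft : dist (f t) (f u) = |t - u| := hfiso t ⟨ht0, htd⟩ u ⟨hu0, hud'⟩
    have htu2 : t - u ≤ (ε - dist (f u) (p k'))/2 := by
      have : t ≤ u + (ε - dist (f u) (p k'))/2 := min_le_right _ _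
      linarith
    refine ⟨t, (hmemT k' t).mpr ⟨⟨ht0, htd⟩, ?_⟩, htu⟩
    refine mem_ball.mpr ?_
    calc dist (f t) (p k') ≤ dist (f t) (f u) + dist (f u) (p k') := dist_triangle _ _ _
      _ = |t - u| + dist (f u) (p k') := by rw [htft]
      _ = (t - u) + dist (f u) (p k') := by rw [abs_of_nonneg (by linarith)]
      _ < ε := by linarith
  -- case 1 of the induction
  have case1 : ∀ k, (T k).Nonempty → d - ε < s k →
      ∃ F : Finset (Fin n₀), k ∈ F ∧ (∀ k'' ∈ F, (T k'').Nonempty ∧ s k ≤ s k'') ∧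
        dist (q k) (q j) < 2*ε*(F.card : ℝ) := by
    intro k hk hcase
    rw [hsval] at hcase
    obtain ⟨t, ht, htgt⟩ := exists_lt_of_lt_csSup hk hcase
    obtain ⟨⟨ht0, htd⟩, htb⟩ := (hmemT k t).mp ht
    have hfj : f t ∈ ball (p j) ε := by
      refine mem_ball.mpr ?_
      have h1 : dist (f t) (f d) = |t - d| := hfiso t ⟨ht0, htd⟩ d ⟨hd0, le_rfl⟩
      rw [hfd] at h1
      rw [h1, abs_of_nonpos (by linarith)]
      linarith
    have hballs : (ball (p k) ε ∩ ball (p j) ε).Nonempty := ⟨f t, htb, hfj⟩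
    refine ⟨{k}, Finset.mem_singleton_self k, ?_, ?_⟩
    · intro k'' hk''
      rw [Finset.mem_singleton] at hk''
      subst hk''
      exact ⟨hk, le_rfl⟩
    · simpa using hop k j hballs
  -- case 2 of the induction
  have case2 : ∀ k, (T k).Nonempty → s k ≤ d - ε →
      ∃ k', (T k').Nonempty ∧ s k < s k' ∧ (ball (p k) ε ∩ ball (p k') ε).Nonempty := by
    intro k hk hcase
    have hsk0 : 0 ≤ s k := hs_nonneg k hk
    have hskd' : s k ≤ d := hs_le_d k hk
    have hskd : s k < d := by linarith
    obtain ⟨k', hk'⟩ := hpcov (f (s k))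
    have hsTk' : s k ∈ T k' := (hmemT k' (s k)).mpr ⟨⟨hsk0, hskd'⟩, hk'⟩
    obtain ⟨t, ht, hst⟩ := hextend k' (s k) hsTk' hskd
    have hsk' : s k < s k' := by
      rw [hsval k']
      exact lt_of_lt_of_le hst (le_csSup (hTbdd k') ht)
    have hδ : 0 < ε - dist (f (s k)) (p k') := by
      have := mem_ball.mp hk'; linarith
    have hlt : s k - (ε - dist (f (s k)) (p k')) < s k := by linarith
    rw [hsval k] at hlt
    obtain ⟨t', ht', htgt'⟩ := exists_lt_of_lt_csSup hk hlt
    have ht'le : t' ≤ s k := by rw [hsval k]; exact le_csSup (hTbdd k) ht'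
    obtain ⟨⟨ht'0, ht'd⟩, ht'b⟩ := (hmemT k t').mp ht'
    have hdd : dist (f t') (f (s k)) = |t' - s k| :=
      hfiso t' ⟨ht'0, ht'd⟩ (s k) ⟨hsk0, hskd'⟩
    have hint : dist (f t') (p k') < ε := by
      calc dist (f t') (p k') ≤ dist (f t') (f (s k)) + dist (f (s k)) (p k') :=
            dist_triangle _ _ _
        _ = |t' - s k| + dist (f (s k)) (p k') := by rw [hdd]
        _ = (s k - t') + dist (f (s k)) (p k') := by
            rw [abs_of_nonpos (by linarith), neg_sub]
        _ < ε := by linarith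
    exact ⟨k', ⟨t, ht⟩, hsk', ⟨f t', ht'b, mem_ball.mpr hint⟩⟩
  -- main induction
  have key : ∀ m : ℕ, ∀ k, (T k).Nonempty →
      (Finset.univ.filter (fun k' => (T k').Nonempty ∧ s k < s k')).card ≤ m →
      ∃ F : Finset (Fin n₀), k ∈ F ∧ (∀ k'' ∈ F, (T k'').Nonempty ∧ s k ≤ s k'') ∧
        dist (q k) (q j) < 2*ε*(F.card : ℝ) := by
    intro m
    induction m with
    | zero =>
      intro k hk hcard
      rcases lt_or_ge (d - ε) (s k) with h | h
      · exact case1 k hk h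
      · exfalso
        obtain ⟨k', h1, h2, _⟩ := case2 k hk h
        have hmem : k' ∈ Finset.univ.filter (fun k' => (T k').Nonempty ∧ s k < s k') :=
          Finset.mem_filter.mpr ⟨Finset.mem_univ _, h1, h2⟩
        have := Finset.card_pos.mpr ⟨k', hmem⟩
        omega
    | succ m ih =>
      intro k hk hcard
      rcases lt_or_ge (d - ε) (s k) with h | h
      · exact case1 k hk h
      · obtain ⟨k', h1, h2, h3⟩ := case2 k hk h
        have hsubset : insert k'
            (Finset.univ.filter (fun k'' => (T k'').Nonempty ∧ s k' < s k''))
            ⊆ Finset.univ.filter (fun k'' => (T k'').Nonempty ∧ s k < s k'') := by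
          intro x hx
          rcases Finset.mem_insert.mp hx with rfl | hx
          · exact Finset.mem_filter.mpr ⟨Finset.mem_univ _, h1, h2⟩
          · obtain ⟨-, hTx, hlt⟩ := Finset.mem_filter.mp hx
            exact Finset.mem_filter.mpr ⟨Finset.mem_univ _, hTx, h2.trans hlt⟩
        have hk'notin : k' ∉
            Finset.univ.filter (fun k'' => (T k'').Nonempty ∧ s k' < s k'') := by
          intro hmem
          exact absurd (Finset.mem_filter.mp hmem).2.2 (lt_irrefl _)
        have hcard' :
            (Finset.univ.filter (fun k'' => (T k'').Nonempty ∧ s k' < s k'')).card ≤ m := by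
          have h4 := Finset.card_le_card hsubset
          rw [Finset.card_insert_of_notMem hk'notin] at h4
          omega
        obtain ⟨F', hk'F, hprop, hdist⟩ := ih k' h1 hcard'
        have hknotF : k ∉ F' := by
          intro hkF
          exact absurd ((hprop k hkF).2) (not_le.mpr h2)
        refine ⟨insert k F', Finset.mem_insert_self _ _, ?_, ?_⟩
        · intro k'' hk''
          rcases Finset.mem_insert.mp hk'' with rfl | hk''
          · exact ⟨hk, le_rfl⟩
          · exact ⟨(hprop k'' hk'').1, h2.le.trans (hprop k'' hk'').2⟩
        · rw [Finset.card_insert_of_notMem hknotF]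
          have h2e : dist (q k) (q k') < 2*ε := hop k k' h3
          calc dist (q k) (q j) ≤ dist (q k) (q k') + dist (q k') (q j) :=
                dist_triangle _ _ _
            _ < 2*ε + 2*ε*(F'.card : ℝ) := add_lt_add h2e hdist
            _ = 2*ε*((F'.card + 1 : ℕ) : ℝ) := by push_cast; ring
  -- start the chain
  obtain ⟨k₀, hk₀⟩ := hpcov (f 0)
  have hT₀ : (T k₀).Nonempty := ⟨0, (hmemT k₀ 0).mpr ⟨⟨le_rfl, hd0⟩, hk₀⟩⟩
  obtain ⟨F, hk₀F, hprop, hdist⟩ := key n₀ k₀ hT₀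
    (le_trans (Finset.card_filter_le _ _) (by simp))
  have hfirst : dist (q i) (q k₀) < 2*ε := by
    apply hop i k₀
    exact ⟨p i, mem_ball_self hε, by rw [← hf0]; exact hk₀⟩
  have hcardF : (F.card : ℝ) ≤ 1/c₀ := hpack F (fun k hk => (hprop k hk).1)
  calc dist (q i) (q j) ≤ dist (q i) (q k₀) + dist (q k₀) (q j) := dist_triangle _ _ _
    _ < 2*ε + 2*ε*(F.card : ℝ) := add_lt_add hfirst hdist
    _ ≤ (2/c₀ + 2) * ε := by
        have h1 : 2*ε*(F.card:ℝ) ≤ 2*ε*(1/c₀) :=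
          mul_le_mul_of_nonneg_left hcardF (by positivity)
        have h2 : (2/c₀ + 2)*ε = 2*ε + 2*ε*(1/c₀) := by field_simp; ring
        linarith
end

section
/- Let (X,d) be a metric space and let ν be a Borel measure on X whose support is all of X and which is finite on bounded sets, satisfying the Bishop–Gromov inequality with parameters (K,N), where K ≤ 0 and 1 < N < ∞. Then for every R > 0 there exists c = c(K,N,R) > 0 such that for every z ∈ X, every x ∈ X and every r with 0 < r ≤ R, if B(x,r) ⊆ B(z,R) then ν(B(x,r)) ≥ c·ν(B(z,R))·r^N. -/
open MeasureTheory Metric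

/-- The constant comparing `SKN` with `t ^ (N-1)` from below. -/
noncomputable def cSKN (K N : ℝ) : ℝ :=
  if K = 0 then 1 else Real.sqrt (|K| / (N - 1)) ^ (N - 1)

lemma cSKN_pos (K N : ℝ) (hK : K ≤ 0) (hN : 1 < N) : 0 < cSKN K N := by
  unfold cSKN
  split_ifs with h
  · norm_num
  · have hKlt : K < 0 := lt_of_le_of_ne hK h
    have : 0 < |K| / (N - 1) := div_pos (abs_pos.2 h) (by linarith)
    exact Real.rpow_pos_of_pos (Real.sqrt_pos.2 this) _

lemma cSKN_le (K N : ℝ) (hN : 1 < N) {t : ℝ} (ht : 0 ≤ t) :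
    cSKN K N * t ^ (N - 1) ≤ SKN K N t := by
  unfold cSKN SKN
  split_ifs with h
  · simp
  · set a := Real.sqrt (|K| / (N - 1)) with ha
    have ha0 : 0 ≤ a := Real.sqrt_nonneg _
    have h1 : a * t ≤ Real.sinh (a * t) := Real.self_le_sinh_iff.2 (mul_nonneg ha0 ht)
    calc a ^ (N - 1) * t ^ (N - 1) = (a * t) ^ (N - 1) := (Real.mul_rpow ha0 ht).symm
      _ ≤ Real.sinh (a * t) ^ (N - 1) :=
        Real.rpow_le_rpow (mul_nonneg ha0 ht) h1 (by linarith)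

lemma SKN_continuousOn (K N : ℝ) (hN : 1 < N) :
    ContinuousOn (SKN K N) (Set.Ici 0) := by
  unfold SKN
  split_ifs with h
  · exact ContinuousOn.rpow continuousOn_id continuousOn_const
      (fun x _ => Or.inr (by linarith))
  · exact ContinuousOn.rpow
      ((Real.continuous_sinh.comp (continuous_const.mul continuous_id)).continuousOn)
      continuousOn_const (fun x _ => Or.inr (by linarith))

lemma SKN_intInt (K N : ℝ) (hN : 1 < N) {r : ℝ} (hr : 0 ≤ r) :
    IntervalIntegrable (SKN K N) MeasureTheory.volume 0 r := by
  apply ContinuousOn.intervalIntegrable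
  apply (SKN_continuousOn K N hN).mono
  rw [Set.uIcc_of_le hr]
  exact fun x hx => hx.1

lemma SKN_integral_lb (K N : ℝ) (hK : K ≤ 0) (hN : 1 < N) {r : ℝ} (hr : 0 ≤ r) :
    cSKN K N * r ^ N / N ≤ ∫ t in (0:ℝ)..r, SKN K N t := by
  have hint : IntervalIntegrable (fun t => cSKN K N * t ^ (N - 1))
      MeasureTheory.volume 0 r := by
    apply IntervalIntegrable.const_mul
    apply ContinuousOn.intervalIntegrable
    apply (ContinuousOn.rpow continuousOn_id continuousOn_const
      (fun x _ => Or.inr (by linarith : (0:ℝ) < N - 1))).mono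
    intro x hx
    rw [Set.uIcc_of_le hr] at hx
    exact hx.1
  have hle := intervalIntegral.integral_mono_on hr hint (SKN_intInt K N hN hr)
    (fun t ht => cSKN_le K N hN ht.1)
  have hcalc : ∫ t in (0:ℝ)..r, cSKN K N * t ^ (N - 1) = cSKN K N * r ^ N / N := by
    rw [intervalIntegral.integral_const_mul, integral_rpow (Or.inl (by linarith))]
    rw [Real.zero_rpow (by linarith : N - 1 + 1 ≠ 0)]
    have : N - 1 + 1 = N := by ring
    field_simp [this]
    rw [this, sub_zero]; field_simp
  linarith [hcalc ▸ hle]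

theorem stmt_3 {X : Type*} [MetricSpace X] [MeasurableSpace X] [BorelSpace X]
    (ν : Measure X)
    (hfull : ∀ x : X, ∀ r > (0:ℝ), 0 < ν (ball x r))
    (hbdd : ∀ s : Set X, Bornology.IsBounded s → ν s < ⊤)
    (K N : ℝ) (hK : K ≤ 0) (hN : 1 < N)
    (hBG : BishopGromov ν K N) :
    ∀ R > (0:ℝ), ∃ c > (0:ℝ), ∀ z x : X, ∀ r : ℝ, 0 < r → r ≤ R →
      ball x r ⊆ ball z R →
      c * (ν (ball z R)).toReal * r ^ N ≤ (ν (ball x r)).toReal := by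
  intro R hR
  have hN0 : (0:ℝ) < N := by linarith
  set I2R := ∫ t in (0:ℝ)..(2*R), SKN K N t with hI2R
  have h2R : (0:ℝ) < 2 * R := by linarith
  have hI2Rpos : 0 < I2R := by
    have := SKN_integral_lb K N hK hN (le_of_lt h2R)
    have h1 : 0 < cSKN K N * (2*R) ^ N / N :=
      div_pos (mul_pos (cSKN_pos K N hK hN) (Real.rpow_pos_of_pos h2R N)) hN0
    linarith
  refine ⟨cSKN K N / (N * I2R), div_pos (cSKN_pos K N hK hN) (mul_pos hN0 hI2Rpos),
    fun z x r hr hrR hsub => ?_⟩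
  have hIr : 0 < ∫ t in (0:ℝ)..r, SKN K N t := by
    have := SKN_integral_lb K N hK hN hr.le
    have h1 : 0 < cSKN K N * r ^ N / N :=
      div_pos (mul_pos (cSKN_pos K N hK hN) (Real.rpow_pos_of_pos hr N)) hN0
    linarith
  -- x is in ball z R
  have hxz : dist x z < R := hsub (mem_ball_self hr)
  have hzsub : ball z R ⊆ ball x (2*R) := by
    intro y hy
    have : dist y x < 2 * R := by
      calc dist y x ≤ dist y z + dist z x := dist_triangle y z x
        _ < R + R := by
          rw [dist_comm z x]; exact add_lt_add (mem_ball.1 hy) hxz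
        _ = 2 * R := by ring
    exact mem_ball.2 this
  -- Volumes
  have hVR_le : (ν (ball z R)).toReal ≤ (ν (ball x (2*R))).toReal :=
    ENNReal.toReal_mono (hbdd _ isBounded_ball).ne (measure_mono hzsub)
  have hBGx := hBG x (Set.mem_Ioi.2 hr) (Set.mem_Ioi.2 h2R) (by linarith)
  -- hBGx : V(x,2R)/I2R ≤ V(x,r)/Ir
  have key : (ν (ball x (2*R))).toReal / I2R * (∫ t in (0:ℝ)..r, SKN K N t)
      ≤ (ν (ball x r)).toReal := by
    calc (ν (ball x (2*R))).toReal / I2R * (∫ t in (0:ℝ)..r, SKN K N t)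
        ≤ (ν (ball x r)).toReal / (∫ t in (0:ℝ)..r, SKN K N t)
          * (∫ t in (0:ℝ)..r, SKN K N t) := by
          apply mul_le_mul_of_nonneg_right hBGx hIr.le
      _ = (ν (ball x r)).toReal := div_mul_cancel₀ _ hIr.ne'
  calc cSKN K N / (N * I2R) * (ν (ball z R)).toReal * r ^ N
      = (ν (ball z R)).toReal / I2R * (cSKN K N * r ^ N / N) := by
        field_simp
    _ ≤ (ν (ball x (2*R))).toReal / I2R * (cSKN K N * r ^ N / N) := by
        have hpos : 0 ≤ cSKN K N * r ^ N / N :=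
          le_of_lt (div_pos (mul_pos (cSKN_pos K N hK hN)
            (Real.rpow_pos_of_pos hr N)) hN0)
        gcongr
    _ ≤ (ν (ball x (2*R))).toReal / I2R * (∫ t in (0:ℝ)..r, SKN K N t) := by
        apply mul_le_mul_of_nonneg_left (SKN_integral_lb K N hK hN hr.le)
          (div_nonneg ENNReal.toReal_nonneg hI2Rpos.le)
    _ ≤ (ν (ball x r)).toReal := key
end

section
/- For K ≤ 0 and N ∈ (1,∞), the function h(ε) = (∫₀^{9ε/2} S_K^N(t) dt) / (∫₀^{ε/2} S_K^N(t) dt), defined for ε > 0, satisfies lim_{ε→0⁺} h(ε) = 9^N; consequently h extends to a continuous function on [0,∞) and, for every D > 0, h is bounded on (0,D]. -/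
open MeasureTheory Metric

section Aux

open Real Filter

/-- Global continuous modification of `SKN`, agreeing with it on `[0, ∞)`. -/
noncomputable def St (K N t : ℝ) : ℝ := SKN K N |t|

lemma St_eq {K N t : ℝ} (ht : 0 ≤ t) : St K N t = SKN K N t := by
  simp [St, abs_of_nonneg ht]

lemma St_cont (K : ℝ) {N : ℝ} (hN : 1 < N) : Continuous (St K N) := by
  have hq : (0:ℝ) ≤ N - 1 := by linarith
  unfold St SKN
  by_cases h : K = 0
  · simp only [h, eq_self_iff_true, if_true]
    exact (Real.continuous_rpow_const hq).comp continuous_abs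
  · simp only [if_neg h]
    exact (Real.continuous_rpow_const hq).comp
      (Real.continuous_sinh.comp (continuous_const.mul continuous_abs))

lemma St_pos {K N : ℝ} (hN : 1 < N) {t : ℝ} (ht : 0 < t) : 0 < St K N t := by
  unfold St SKN
  by_cases h : K = 0
  · simp only [h, if_pos rfl]
    exact Real.rpow_pos_of_pos (abs_pos.mpr ht.ne') _
  · simp only [if_neg h]
    refine Real.rpow_pos_of_pos (Real.sinh_pos_iff.mpr ?_) _
    have hc : 0 < Real.sqrt (|K| / (N - 1)) :=
      Real.sqrt_pos.mpr (div_pos (abs_pos.mpr h) (by linarith))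
    exact mul_pos hc (abs_pos.mpr ht.ne')

lemma sinh_div_lim : Tendsto (fun x : ℝ => Real.sinh x / x) (nhdsWithin 0 {(0:ℝ)}ᶜ) (nhds 1) := by
  have h := (Real.hasDerivAt_sinh 0)
  rw [hasDerivAt_iff_tendsto_slope] at h
  simp only [Real.cosh_zero] at h
  refine h.congr fun x => ?_
  simp [slope, Real.sinh_zero, div_eq_inv_mul]

end Aux

theorem stmt_5 (K N : ℝ) (hK : K ≤ 0) (hN : 1 < N) :
    Filter.Tendsto
      (fun ε : ℝ => (∫ t in (0:ℝ)..(9 * ε / 2), SKN K N t) /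
        ∫ t in (0:ℝ)..(ε / 2), SKN K N t)
      (nhdsWithin 0 (Set.Ioi 0)) (nhds ((9:ℝ) ^ N)) ∧
    (∃ g : ℝ → ℝ, ContinuousOn g (Set.Ici 0) ∧
      ∀ ε > (0:ℝ), g ε = (∫ t in (0:ℝ)..(9 * ε / 2), SKN K N t) /
        ∫ t in (0:ℝ)..(ε / 2), SKN K N t) ∧
    (∀ D > (0:ℝ), ∃ M : ℝ, ∀ ε : ℝ, 0 < ε → ε ≤ D →
      (∫ t in (0:ℝ)..(9 * ε / 2), SKN K N t) /
        (∫ t in (0:ℝ)..(ε / 2), SKN K N t) ≤ M) := by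
  classical
  open Real Filter intervalIntegral in
  -- basic facts
  have hcont : Continuous (St K N) := St_cont K hN
  set F : ℝ → ℝ := fun x => ∫ t in (0:ℝ)..x, St K N t with hFdef
  have hF' : ∀ b : ℝ, HasDerivAt F (St K N b) b := fun b =>
    (hcont.integral_hasStrictDerivAt 0 b).hasDerivAt
  have hFcont : Continuous F := by
    have : Differentiable ℝ F := fun b => (hF' b).differentiableAt
    exact this.continuous
  have hF0 : F 0 = 0 := intervalIntegral.integral_same
  have hFpos : ∀ {x : ℝ}, 0 < x → 0 < F x := by
    intro x hx
    exact intervalIntegral_pos_of_pos_on (hcont.intervalIntegrable 0 x)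
      (fun t ht => St_pos hN ht.1) hx
  -- congruence of integrals
  have hIcongr : ∀ {x : ℝ}, 0 ≤ x →
      (∫ t in (0:ℝ)..x, SKN K N t) = F x := by
    intro x hx
    refine intervalIntegral.integral_congr fun t ht => ?_
    rw [Set.uIcc_of_le hx] at ht
    exact (St_eq ht.1).symm
  -- the key ratio limit for St
  have hb9 : Tendsto (fun ε : ℝ => 9 * ε / 2) (nhdsWithin 0 (Set.Ioi 0)) (nhdsWithin 0 (Set.Ioi 0)) := by
    apply tendsto_nhdsWithin_of_tendsto_nhds_of_eventually_within
    · have : Tendsto (fun ε : ℝ => 9 * ε / 2) (nhds 0) (nhds (9 * 0 / 2)) :=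
        ((continuous_const.mul continuous_id).div_const 2).tendsto 0
      simpa using this.mono_left nhdsWithin_le_nhds
    · filter_upwards [self_mem_nhdsWithin] with ε hε
      have : (0:ℝ) < ε := hε
      have : (0:ℝ) < 9 * ε / 2 := by linarith
      exact this
  have hb1 : Tendsto (fun ε : ℝ => ε / 2) (nhdsWithin 0 (Set.Ioi 0)) (nhdsWithin 0 (Set.Ioi 0)) := by
    apply tendsto_nhdsWithin_of_tendsto_nhds_of_eventually_within
    · have : Tendsto (fun ε : ℝ => ε / 2) (nhds 0) (nhds ((0:ℝ) / 2)) :=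
        (continuous_id.div_const 2).tendsto 0
      simpa using this.mono_left nhdsWithin_le_nhds
    · filter_upwards [self_mem_nhdsWithin] with ε hε
      have : (0:ℝ) < ε := hε
      have : (0:ℝ) < ε / 2 := by linarith
      exact this
  have hratio : Tendsto (fun ε : ℝ => St K N (9 * ε / 2) / St K N (ε / 2))
      (nhdsWithin 0 (Set.Ioi 0)) (nhds ((9:ℝ) ^ (N - 1))) := by
    by_cases h : K = 0
    · -- ratio is constantly 9 ^ (N-1)
      apply Tendsto.congr' _ tendsto_const_nhds
      filter_upwards [self_mem_nhdsWithin] with ε hε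
      have hε' : (0:ℝ) < ε := hε
      have h1 : (0:ℝ) < 9 * ε / 2 := by linarith
      have h2 : (0:ℝ) < ε / 2 := by linarith
      rw [St_eq h1.le, St_eq h2.le]
      simp only [SKN, h, eq_self_iff_true, if_true]
      rw [← Real.div_rpow h1.le h2.le]
      have h9 : (9 * ε / 2) / (ε / 2) = 9 := by
        field_simp
      rw [h9]
    · -- hyperbolic case
      set c : ℝ := Real.sqrt (|K| / (N - 1)) with hcdef
      have hc : 0 < c := Real.sqrt_pos.mpr (div_pos (abs_pos.mpr h) (by linarith))
      -- inner ratio → 9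
      have hsub : nhdsWithin (0:ℝ) (Set.Ioi 0) ≤ nhdsWithin 0 {(0:ℝ)}ᶜ :=
        nhdsWithin_mono 0 (fun x hx => ne_of_gt hx)
      have ha : Tendsto (fun ε : ℝ => c * (9 * ε / 2)) (nhdsWithin 0 (Set.Ioi 0))
          (nhdsWithin 0 {(0:ℝ)}ᶜ) := by
        apply tendsto_nhdsWithin_of_tendsto_nhds_of_eventually_within
        · have : Tendsto (fun ε : ℝ => c * (9 * ε / 2)) (nhds 0) (nhds (c * (9 * 0 / 2))) :=
            (continuous_const.mul ((continuous_const.mul continuous_id).div_const 2)).tendsto 0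
          simpa using this.mono_left nhdsWithin_le_nhds
        · filter_upwards [self_mem_nhdsWithin] with ε hε
          have : (0:ℝ) < ε := hε
          have : (0:ℝ) < c * (9 * ε / 2) := by positivity
          exact ne_of_gt this
      have hb : Tendsto (fun ε : ℝ => c * (ε / 2)) (nhdsWithin 0 (Set.Ioi 0))
          (nhdsWithin 0 {(0:ℝ)}ᶜ) := by
        apply tendsto_nhdsWithin_of_tendsto_nhds_of_eventually_within
        · have : Tendsto (fun ε : ℝ => c * (ε / 2)) (nhds 0) (nhds (c * ((0:ℝ) / 2))) :=
            (continuous_const.mul (continuous_id.div_const 2)).tendsto 0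
          simpa using this.mono_left nhdsWithin_le_nhds
        · filter_upwards [self_mem_nhdsWithin] with ε hε
          have : (0:ℝ) < ε := hε
          have : (0:ℝ) < c * (ε / 2) := by positivity
          exact ne_of_gt this
      have T1 : Tendsto (fun ε : ℝ => Real.sinh (c * (9 * ε / 2)) / (c * (9 * ε / 2)))
          (nhdsWithin 0 (Set.Ioi 0)) (nhds 1) := sinh_div_lim.comp ha
      have T2 : Tendsto (fun ε : ℝ => Real.sinh (c * (ε / 2)) / (c * (ε / 2)))
          (nhdsWithin 0 (Set.Ioi 0)) (nhds 1) := sinh_div_lim.comp hb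
      have Tinner : Tendsto (fun ε : ℝ => Real.sinh (c * (9 * ε / 2)) / Real.sinh (c * (ε / 2)))
          (nhdsWithin 0 (Set.Ioi 0)) (nhds 9) := by
        have h9 : Tendsto (fun ε : ℝ =>
            9 * (Real.sinh (c * (9 * ε / 2)) / (c * (9 * ε / 2))) /
              (Real.sinh (c * (ε / 2)) / (c * (ε / 2))))
            (nhdsWithin 0 (Set.Ioi 0)) (nhds 9) := by
          have := ((T1.const_mul (9:ℝ)).div T2 (by norm_num))
          convert this using 2 <;> norm_num
        apply h9.congr'
        filter_upwards [self_mem_nhdsWithin] with ε hε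
        have hε' : (0:ℝ) < ε := hε
        have hbpos : (0:ℝ) < c * (ε / 2) := by positivity
        have hsb : Real.sinh (c * (ε / 2)) ≠ 0 := (Real.sinh_pos_iff.mpr hbpos).ne'
        have hane : c * (9 * ε / 2) ≠ 0 := by positivity
        have h99 : c * (9 * ε / 2) = 9 * (c * (ε / 2)) := by ring
        field_simp
      -- apply rpow
      have hrpowcont : ContinuousAt (fun x : ℝ => x ^ (N - 1)) 9 :=
        Real.continuousAt_rpow_const 9 (N - 1) (Or.inl (by norm_num))
      have := hrpowcont.tendsto.comp Tinner
      apply this.congr'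
      filter_upwards [self_mem_nhdsWithin] with ε hε
      have hε' : (0:ℝ) < ε := hε
      have h1 : (0:ℝ) < c * (9 * ε / 2) := by positivity
      have h2 : (0:ℝ) < c * (ε / 2) := by positivity
      have hs1 : (0:ℝ) ≤ Real.sinh (c * (9 * ε / 2)) := (Real.sinh_pos_iff.mpr h1).le
      have hs2 : (0:ℝ) ≤ Real.sinh (c * (ε / 2)) := (Real.sinh_pos_iff.mpr h2).le
      have e1 : (0:ℝ) < 9 * ε / 2 := by linarith
      have e2 : (0:ℝ) < ε / 2 := by linarith
      rw [Function.comp_apply, St_eq e1.le, St_eq e2.le]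
      simp only [SKN, if_neg h]
      rw [← hcdef, Real.div_rpow hs1 hs2]
  -- main limit via L'Hôpital for F-version
  have hinner9 : ∀ ε : ℝ, HasDerivAt (fun ε : ℝ => 9 * ε / 2) (9 / 2) ε := by
    intro ε
    simpa using ((hasDerivAt_id ε).const_mul (9:ℝ)).div_const 2
  have hinner1 : ∀ ε : ℝ, HasDerivAt (fun ε : ℝ => ε / 2) (1 / 2) ε := by
    intro ε
    simpa using (hasDerivAt_id ε).div_const 2
  have hmainF : Tendsto (fun ε : ℝ => F (9 * ε / 2) / F (ε / 2))
      (nhdsWithin 0 (Set.Ioi 0)) (nhds ((9:ℝ) ^ N)) := by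
    apply HasDerivAt.lhopital_zero_nhdsGT
      (f' := fun ε => St K N (9 * ε / 2) * (9 / 2))
      (g' := fun ε => St K N (ε / 2) * (1 / 2))
    · filter_upwards with ε
      exact (hF' (9 * ε / 2)).comp ε (hinner9 ε)
    · filter_upwards with ε
      exact (hF' (ε / 2)).comp ε (hinner1 ε)
    · filter_upwards [self_mem_nhdsWithin] with ε hε
      have hε' : (0:ℝ) < ε := hε
      have : (0:ℝ) < St K N (ε / 2) := St_pos hN (by linarith)
      positivity
    · have : Tendsto (fun ε : ℝ => F (9 * ε / 2)) (nhdsWithin 0 (Set.Ioi 0)) (nhds (F (9 * 0 / 2))) := by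
        exact (hFcont.tendsto _).comp ((((continuous_const.mul continuous_id).div_const 2).tendsto 0 : Tendsto (fun ε : ℝ => 9 * ε / 2) (nhds 0) (nhds (9 * 0 / 2))).mono_left nhdsWithin_le_nhds)
      simpa [hF0] using this
    · have : Tendsto (fun ε : ℝ => F (ε / 2)) (nhdsWithin 0 (Set.Ioi 0)) (nhds (F (0 / 2))) := by
        exact (hFcont.tendsto _).comp (((continuous_id.div_const 2).tendsto 0 : Tendsto (fun ε : ℝ => ε / 2) (nhds 0) (nhds ((0:ℝ) / 2))).mono_left nhdsWithin_le_nhds)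
      simpa [hF0] using this
    · have h9N : (9:ℝ) ^ N = 9 * (9:ℝ) ^ (N - 1) := by
        have hNe : N = 1 + (N - 1) := by ring
        rw [hNe, Real.rpow_add (by norm_num : (0:ℝ) < 9), Real.rpow_one]
        ring_nf
      rw [h9N]
      have := hratio.const_mul (9:ℝ)
      apply this.congr
      intro ε
      have h12 : ((9:ℝ)/2) / (1/2) = 9 := by norm_num
      rw [mul_div_mul_comm, h12, mul_comm]
  -- transfer to SKN version
  have hEq : (fun ε : ℝ => (∫ t in (0:ℝ)..(9 * ε / 2), SKN K N t) /
        ∫ t in (0:ℝ)..(ε / 2), SKN K N t)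
      =ᶠ[nhdsWithin (0:ℝ) (Set.Ioi 0)] fun ε => F (9 * ε / 2) / F (ε / 2) := by
    filter_upwards [self_mem_nhdsWithin] with ε hε
    have hε' : (0:ℝ) < ε := hε
    rw [hIcongr (by linarith : (0:ℝ) ≤ 9 * ε / 2), hIcongr (by linarith : (0:ℝ) ≤ ε / 2)]
  have hmain : Tendsto
      (fun ε : ℝ => (∫ t in (0:ℝ)..(9 * ε / 2), SKN K N t) /
        ∫ t in (0:ℝ)..(ε / 2), SKN K N t)
      (nhdsWithin 0 (Set.Ioi 0)) (nhds ((9:ℝ) ^ N)) := hmainF.congr' hEq.symm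
  refine ⟨hmain, ?_⟩
  -- continuous extension
  set g : ℝ → ℝ := fun x => if x = 0 then (9:ℝ) ^ N else F (9 * x / 2) / F (x / 2) with hgdef
  have hgval : ∀ ε > (0:ℝ), g ε = (∫ t in (0:ℝ)..(9 * ε / 2), SKN K N t) /
      ∫ t in (0:ℝ)..(ε / 2), SKN K N t := by
    intro ε hε
    rw [hgdef]
    simp only [if_neg hε.ne']
    rw [hIcongr (by linarith : (0:ℝ) ≤ 9 * ε / 2), hIcongr (by linarith : (0:ℝ) ≤ ε / 2)]
  have hgcont : ContinuousOn g (Set.Ici 0) := by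
    intro x hx
    rcases eq_or_lt_of_le (Set.mem_Ici.mp hx : (0:ℝ) ≤ x) with rfl | hx'
    · -- continuity at 0
      rw [ContinuousWithinAt]
      have hg0 : g 0 = (9:ℝ) ^ N := by simp [hgdef]
      rw [hg0]
      have hsplit : Set.Ici (0:ℝ) = {0} ∪ Set.Ioi 0 := by
        ext y; simp [le_iff_lt_or_eq, Set.mem_Ioi, eq_comm, or_comm]
      rw [hsplit, nhdsWithin_union]
      rw [Filter.tendsto_sup]
      constructor
      · rw [nhdsWithin_singleton]
        simpa [hg0] using (tendsto_pure_pure g 0).mono_right (pure_le_nhds _)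
      · apply hmainF.congr'
        filter_upwards [self_mem_nhdsWithin] with ε hε
        have : (0:ℝ) < ε := hε
        simp [hgdef, this.ne']
    · -- continuity at x > 0
      have hcontF : ContinuousAt (fun y : ℝ => F (9 * y / 2) / F (y / 2)) x := by
        apply ContinuousAt.div
        · exact (hFcont.comp ((continuous_const.mul continuous_id).div_const 2)).continuousAt
        · exact (hFcont.comp (continuous_id.div_const 2)).continuousAt
        · exact (hFpos (by linarith : (0:ℝ) < x / 2)).ne'
      have hEqnhds : g =ᶠ[nhds x] fun y : ℝ => F (9 * y / 2) / F (y / 2) := by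
        filter_upwards [Ioi_mem_nhds hx'] with y hy
        have : (0:ℝ) < y := hy
        simp [hgdef, this.ne']
      exact (hcontF.congr hEqnhds.symm).continuousWithinAt
  refine ⟨⟨g, hgcont, hgval⟩, ?_⟩
  -- boundedness on (0, D]
  intro D hD
  have hcompact : IsCompact (Set.Icc (0:ℝ) D) := isCompact_Icc
  have hne : (Set.Icc (0:ℝ) D).Nonempty := ⟨0, by constructor <;> linarith⟩
  obtain ⟨x₀, hx₀, hmax⟩ := hcompact.exists_isMaxOn hne
    (hgcont.mono (fun y hy => hy.1))
  refine ⟨g x₀, fun ε hε hεD => ?_⟩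
  rw [← hgval ε hε]
  exact hmax ⟨hε.le, hεD⟩
end
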